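/- Let T ≥ 1 and m = (m_0,…,m_T) ∈ M_T with H̲_T(m) · H̄_T(m) = 0, and let T' := min{t ≤ T : H̲_t(m) · H̄_t(m) = 0}. Let q := q̲_T(m) = q̄_T(m). Then: if H̲_{T'}(m) = 0, q is the unique real solution of H̲_{T'}(m_{T−T'+1},…,m_T, q) = 0; and if H̄_{T'}(m) = 0, q is the unique real solution of H̄_{T'}(m_{T−T'+1},…,m_T, q) = 0. -/

import Mathlib

open MeasureTheory

/-- `μ` is a Borel probability measure on `[0,1]` (viewed as a measure on `ℝ` giving no mass
to the complement of `[0,1]`) whose first `T+1` raw moments are `m_0, …, m_T`. -/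
def IsMomentSeq (T : ℕ) (μ : Measure ℝ) (m : Fin (T + 1) → ℝ) : Prop :=
  IsProbabilityMeasure μ ∧ μ (Set.Icc (0 : ℝ) 1)ᶜ = 0 ∧
    ∀ t : Fin (T + 1), m t = ∫ u, u ^ (t : ℕ) ∂μ

/-- The moment space `M_T ⊆ ℝ^{T+1}`: vectors of the first `T+1` raw moments of Borel
probability measures on `[0,1]`. -/
def momSpace (T : ℕ) : Set (Fin (T + 1) → ℝ) :=
  {m | ∃ μ : Measure ℝ, IsMomentSeq T μ m}

/-- `D(m)`: the set of Borel probability measures on `[0,1]` with raw moments `m_0, …, m_T`. -/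
def Dset (T : ℕ) (m : Fin (T + 1) → ℝ) : Set (Measure ℝ) :=
  {μ | IsMomentSeq T μ m}

/-- `q̲_T(m) = inf_{μ ∈ D(m)} ∫ u^{T+1} dμ(u)`. -/
noncomputable def qlow (T : ℕ) (m : Fin (T + 1) → ℝ) : ℝ :=
  sInf ((fun μ : Measure ℝ => ∫ u, u ^ (T + 1) ∂μ) '' Dset T m)

/-- `q̄_T(m) = sup_{μ ∈ D(m)} ∫ u^{T+1} dμ(u)`. -/
noncomputable def qup (T : ℕ) (m : Fin (T + 1) → ℝ) : ℝ :=
  sSup ((fun μ : Measure ℝ => ∫ u, u ^ (T + 1) ∂μ) '' Dset T m)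

/-- Extension of a finite vector to `ℕ → ℝ` (junk value `0` outside the range). -/
def toFun {n : ℕ} (m : Fin n → ℝ) : ℕ → ℝ :=
  fun k => if h : k < n then m ⟨k, h⟩ else 0

/-- The lower Hankel determinant `H̲_t(m)` (with `0`-based indexing of `m`):
for `t` even, `det[(m_{i+j})_{0 ≤ i,j ≤ t/2}]`; for `t` odd,
`det[(m_{i+j+1})_{0 ≤ i,j ≤ (t+1)/2 - 1}]`. -/
noncomputable def Hlow (t : ℕ) (m : ℕ → ℝ) : ℝ :=
  if t % 2 = 0 then
    Matrix.det (Matrix.of fun i j : Fin (t / 2 + 1) => m (i.val + j.val))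
  else
    Matrix.det (Matrix.of fun i j : Fin ((t + 1) / 2) => m (i.val + j.val + 1))

/-- The upper Hankel determinant `H̄_t(m)` (with `0`-based indexing of `m`):
for `t` even, `det[(m_{i+j+1} - m_{i+j+2})_{0 ≤ i,j ≤ t/2 - 1}]`; for `t` odd,
`det[(m_{i+j} - m_{i+j+1})_{0 ≤ i,j ≤ (t+1)/2 - 1}]`. -/
noncomputable def Hup (t : ℕ) (m : ℕ → ℝ) : ℝ :=
  if t % 2 = 0 then
    Matrix.det (Matrix.of fun i j : Fin (t / 2) => m (i.val + j.val + 1) - m (i.val + j.val + 2))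
  else
    Matrix.det (Matrix.of fun i j : Fin ((t + 1) / 2) => m (i.val + j.val) - m (i.val + j.val + 1))

open Polynomial Finset Matrix

noncomputable def hkM (S : Finset ℝ) (c : ℝ → ℝ) (n : ℕ) : Matrix (Fin n) (Fin n) ℝ :=
  Matrix.of fun i j : Fin n => ∑ z ∈ S, c z * z ^ (i.val + j.val)

noncomputable def pvec {n : ℕ} (v : Fin n → ℝ) : Polynomial ℝ :=
  ∑ i : Fin n, Polynomial.monomial i.val (v i)

lemma pvec_eval {n : ℕ} (v : Fin n → ℝ) (z : ℝ) :
    (pvec v).eval z = ∑ i : Fin n, v i * z ^ i.val := by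
  simp [pvec, Polynomial.eval_finset_sum]

lemma pvec_coeff {n : ℕ} (v : Fin n → ℝ) (i : Fin n) : (pvec v).coeff i.val = v i := by
  rw [pvec, Polynomial.finset_sum_coeff]
  rw [Finset.sum_eq_single i]
  · simp
  · intro b _ hb
    rw [Polynomial.coeff_monomial, if_neg]
    exact fun h => hb (by ext; omega)
  · simp

lemma pvec_ne_zero {n : ℕ} {v : Fin n → ℝ} (hv : v ≠ 0) : pvec v ≠ 0 := by
  intro h
  apply hv
  funext i
  have := pvec_coeff v i
  rw [h] at this
  simpa using this.symm

lemma pvec_natDegree_lt {n : ℕ} (v : Fin n → ℝ) (hn : 0 < n) : (pvec v).natDegree < n := by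
  have : (pvec v).natDegree ≤ n - 1 := by
    apply Polynomial.natDegree_sum_le_of_forall_le
    intro i _
    exact le_trans (Polynomial.natDegree_monomial_le _) (by omega)
  omega

lemma vanish_of_card {n : ℕ} (F : Finset ℝ) (v : Fin n → ℝ)
    (h : ∀ z ∈ F, ∑ i : Fin n, v i * z ^ i.val = 0) (hc : n ≤ F.card) : v = 0 := by
  by_contra hv
  have hn : 0 < n := by
    rcases Nat.eq_zero_or_pos n with h0 | h0
    · subst h0; exact absurd (Subsingleton.elim v 0) hv
    · exact h0
  have hP : pvec v ≠ 0 := pvec_ne_zero hv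
  have hroots : F.val ≤ (pvec v).roots := by
    rw [Multiset.le_iff_count]
    intro z
    by_cases hz : z ∈ F
    · rw [Multiset.count_eq_one_of_mem F.nodup hz]
      rw [Multiset.one_le_count_iff_mem, Polynomial.mem_roots hP]
      rw [Polynomial.IsRoot, pvec_eval]
      exact h z hz
    · simp [Multiset.count_eq_zero_of_notMem, hz]
  have h1 := Multiset.card_le_card hroots
  have h2 := Polynomial.card_roots' (pvec v)
  have h3 := pvec_natDegree_lt v hn
  simp only [Finset.card_def] at hc
  omega

lemma hk_mulVec (S : Finset ℝ) (c : ℝ → ℝ) (n : ℕ) (v : Fin n → ℝ) (j : Fin n) :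
    (hkM S c n).mulVec v j = ∑ z ∈ S, c z * z ^ j.val * ∑ i : Fin n, v i * z ^ i.val := by
  simp only [Matrix.mulVec, dotProduct, hkM, Matrix.of_apply]
  simp_rw [Finset.sum_mul]
  rw [Finset.sum_comm]
  apply Finset.sum_congr rfl
  intro z _
  rw [Finset.mul_sum]
  apply Finset.sum_congr rfl
  intro i _
  rw [pow_add]
  ring

lemma hk_quadform (S : Finset ℝ) (c : ℝ → ℝ) (n : ℕ) (v : Fin n → ℝ) :
    v ⬝ᵥ (hkM S c n).mulVec v = ∑ z ∈ S, c z * (∑ i : Fin n, v i * z ^ i.val) ^ 2 := by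
  simp only [dotProduct]
  calc ∑ j : Fin n, v j * (hkM S c n).mulVec v j
      = ∑ j : Fin n, ∑ z ∈ S,
          (v j * z ^ j.val) * (c z * ∑ i : Fin n, v i * z ^ i.val) := by
        refine Finset.sum_congr rfl fun j _ => ?_
        rw [hk_mulVec, Finset.mul_sum]
        exact Finset.sum_congr rfl fun z _ => by ring
    _ = ∑ z ∈ S, ∑ j : Fin n,
          (v j * z ^ j.val) * (c z * ∑ i : Fin n, v i * z ^ i.val) := Finset.sum_comm
    _ = ∑ z ∈ S, c z * (∑ i : Fin n, v i * z ^ i.val) ^ 2 := by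
        refine Finset.sum_congr rfl fun z _ => ?_
        rw [← Finset.sum_mul]
        ring

lemma hk_det_eq_zero {S : Finset ℝ} {c : ℝ → ℝ} {n : ℕ}
    (h : (S.filter fun z => c z ≠ 0).card < n) : (hkM S c n).det = 0 := by
  rw [← Matrix.exists_mulVec_eq_zero_iff]
  set F := S.filter fun z => c z ≠ 0 with hF
  set P : Polynomial ℝ := ∏ z ∈ F, (Polynomial.X - Polynomial.C z) with hPdef
  have hdeg : P.natDegree = F.card := by
    rw [hPdef, Polynomial.natDegree_prod]
    · simp [Polynomial.natDegree_X_sub_C]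
    · intro z _; exact Polynomial.X_sub_C_ne_zero z
  have hmonic : P.Monic := Polynomial.monic_prod_of_monic _ _ fun z _ => Polynomial.monic_X_sub_C z
  refine ⟨fun i => P.coeff i.val, ?_, ?_⟩
  · intro hv0
    have : P.coeff F.card = 1 := hdeg ▸ hmonic.coeff_natDegree
    have h2 : (fun i : Fin n => P.coeff i.val) ⟨F.card, h⟩ = 0 := by rw [hv0]; rfl
    simp only at h2
    rw [this] at h2; exact one_ne_zero h2
  · funext j
    rw [hk_mulVec]
    simp only [Pi.zero_apply]
    apply Finset.sum_eq_zero
    intro z hz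
    have heval : (∑ i : Fin n, P.coeff i.val * z ^ i.val) = P.eval z := by
      rw [Polynomial.eval_eq_sum_range' (lt_of_le_of_lt (le_of_eq hdeg) h),
        ← Fin.sum_univ_eq_sum_range]
    rw [heval]
    by_cases hc0 : c z = 0
    · rw [hc0]; ring
    · have hzF : z ∈ F := Finset.mem_filter.2 ⟨hz, hc0⟩
      have : P.eval z = 0 := by
        rw [hPdef, Polynomial.eval_prod]
        exact Finset.prod_eq_zero hzF (by simp)
      rw [this]; ring

lemma hk_det_ne_zero {S : Finset ℝ} {c : ℝ → ℝ} {n : ℕ}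
    (h0 : ∀ z ∈ S, 0 ≤ c z) (hc : n ≤ (S.filter fun z => c z ≠ 0).card) :
    (hkM S c n).det ≠ 0 := by
  intro hdet
  obtain ⟨v, hv, hmv⟩ := Matrix.exists_mulVec_eq_zero_iff.2 hdet
  have hq : ∑ z ∈ S, c z * (∑ i : Fin n, v i * z ^ i.val) ^ 2 = 0 := by
    rw [← hk_quadform, hmv, dotProduct_zero]
  have hterm : ∀ z ∈ S, c z * (∑ i : Fin n, v i * z ^ i.val) ^ 2 = 0 := by
    rw [← Finset.sum_eq_zero_iff_of_nonneg (fun z hz => mul_nonneg (h0 z hz) (sq_nonneg _))]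
    exact hq
  apply hv
  apply vanish_of_card (S.filter fun z => c z ≠ 0) v _ hc
  intro z hzF
  obtain ⟨hzS, hcz⟩ := Finset.mem_filter.1 hzF
  have := hterm z hzS
  rcases mul_eq_zero.1 this with h | h
  · exact absurd h hcz
  · exact pow_eq_zero_iff (by norm_num) |>.1 h

lemma det_corner {n : ℕ} (A : Matrix (Fin (n+1)) (Fin (n+1)) ℝ) (q : ℝ) :
    (Matrix.of fun i j : Fin (n+1) =>
        if i = Fin.last n ∧ j = Fin.last n then q else A i j).det
      = A.det + (q - A (Fin.last n) (Fin.last n))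
          * (A.submatrix Fin.castSucc Fin.castSucc).det := by
  have hB : (Matrix.of fun i j : Fin (n+1) =>
      if i = Fin.last n ∧ j = Fin.last n then q else A i j)
      = A.updateRow (Fin.last n)
        (A (Fin.last n) + Pi.single (Fin.last n) (q - A (Fin.last n) (Fin.last n))) := by
    ext i j
    by_cases hi : i = Fin.last n
    · subst hi
      rw [Matrix.of_apply, Matrix.updateRow_self]
      by_cases hj : j = Fin.last n
      · subst hj
        rw [if_pos ⟨rfl, rfl⟩]
        simp
      · rw [if_neg (fun h => hj h.2)]
        simp [Pi.single_eq_of_ne hj]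
    · rw [Matrix.of_apply, Matrix.updateRow_ne hi, if_neg (fun h => hi h.1)]
  rw [hB, Matrix.det_updateRow_add, Matrix.updateRow_eq_self]
  congr 1
  rw [Matrix.det_succ_row _ (Fin.last n)]
  rw [Finset.sum_eq_single (Fin.last n)]
  · rw [Matrix.updateRow_self]
    simp only [Pi.single_eq_same]
    have hsub : ((A.updateRow (Fin.last n)
          (Pi.single (Fin.last n) (q - A (Fin.last n) (Fin.last n)))).submatrix
          (Fin.last n).succAbove (Fin.last n).succAbove)
        = A.submatrix Fin.castSucc Fin.castSucc := by
      ext i j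
      rw [Fin.succAbove_last]
      simp [Matrix.updateRow_ne (Fin.castSucc_lt_last i).ne]
    rw [hsub]
    have hpow : (-1 : ℝ) ^ ((Fin.last n).val + (Fin.last n).val) = 1 := by
      rw [Fin.val_last, ← two_mul, pow_mul]
      norm_num
    rw [hpow]
    ring
  · intro j _ hj
    rw [Matrix.updateRow_self, Pi.single_eq_of_ne hj]
    ring
  · simp


def bpow (b : Bool) (u : ℝ) : ℝ := if b then 1 - u else 1

def gmom (f : ℕ → ℝ) (a : ℕ) (b : Bool) (n : ℕ) : ℝ :=
  if b then f (a + n) - f (a + n + 1) else f (a + n)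

section meas

variable {T : ℕ} {m : Fin (T + 1) → ℝ} {ν : Measure ℝ} (hν : IsMomentSeq T ν m)

lemma ae_mem_Icc (hν : IsMomentSeq T ν m) : ∀ᵐ u ∂ν, u ∈ Set.Icc (0:ℝ) 1 := by
  rw [MeasureTheory.ae_iff]
  exact hν.2.1

lemma integrable_cont (hν : IsMomentSeq T ν m) {f : ℝ → ℝ} (hf : Continuous f) :
    Integrable f ν := by
  haveI := hν.1
  obtain ⟨C, hC⟩ := (isCompact_Icc (a := (0:ℝ)) (b := 1)).exists_bound_of_continuousOn
    hf.continuousOn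
  apply Integrable.mono' (integrable_const C) hf.aestronglyMeasurable
  filter_upwards [ae_mem_Icc hν] with u hu using hC u hu

lemma moment_eq (hν : IsMomentSeq T ν m) {n : ℕ} (hn : n ≤ T) :
    ∫ u, u ^ n ∂ν = toFun m n := by
  have := hν.2.2 ⟨n, by omega⟩
  rw [toFun, dif_pos (by omega : n < T + 1)]
  exact this.symm

lemma integral_weight (hν : IsMomentSeq T ν m) {e : ℕ} {b : Bool} (he : e + b.toNat ≤ T) :
    ∫ u, u ^ e * bpow b u ∂ν = gmom (toFun m) 0 b e := by
  cases b
  · simp only [bpow, gmom, Bool.false_eq_true, if_false, mul_one, Nat.zero_add]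
    exact moment_eq hν (by simpa using he)
  · simp only [bpow, gmom, if_true, Nat.zero_add]
    have he' : e + 1 ≤ T := by simpa using he
    have h1 : ∀ u : ℝ, u ^ e * (1 - u) = u ^ e - u ^ (e + 1) := fun u => by ring
    simp only [h1]
    rw [integral_sub (integrable_cont hν (by continuity)) (integrable_cont hν (by continuity))]
    rw [moment_eq hν (by omega), moment_eq hν (by omega)]

lemma integral_form (hν : IsMomentSeq T ν m) (a : ℕ) (b : Bool) (n : ℕ) (v : Fin n → ℝ)
    (hn : 0 < n) (h : a + 2 * (n - 1) + b.toNat ≤ T) :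
    ∫ u, u ^ a * bpow b u * (∑ i : Fin n, v i * u ^ i.val) ^ 2 ∂ν
      = v ⬝ᵥ (Matrix.of fun i j : Fin n => gmom (toFun m) a b (i.val + j.val)).mulVec v := by
  have hpt : ∀ u : ℝ, u ^ a * bpow b u * (∑ i : Fin n, v i * u ^ i.val) ^ 2
      = ∑ i : Fin n, ∑ j : Fin n, (v i * v j) * (u ^ (a + (i.val + j.val)) * bpow b u) := by
    intro u
    rw [sq, Finset.sum_mul_sum]
    rw [Finset.mul_sum]
    refine Finset.sum_congr rfl fun i _ => ?_
    rw [Finset.mul_sum]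
    refine Finset.sum_congr rfl fun j _ => ?_
    rw [pow_add, pow_add]
    ring
  simp only [hpt]
  have hint : ∀ i j : Fin n, Integrable
      (fun u : ℝ => (v i * v j) * (u ^ (a + (i.val + j.val)) * bpow b u)) ν := by
    intro i j
    apply integrable_cont hν
    cases b <;> simp [bpow] <;> continuity
  rw [integral_finset_sum _ (fun i _ => integrable_finset_sum _ (fun j _ => hint i j))]
  simp only [dotProduct, Matrix.mulVec, Matrix.of_apply]
  refine Finset.sum_congr rfl fun i _ => ?_
  rw [integral_finset_sum _ (fun j _ => hint i j), Finset.mul_sum]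
  refine Finset.sum_congr rfl fun j _ => ?_
  rw [MeasureTheory.integral_const_mul, integral_weight hν (by have hi := i.2; have hj := j.2; omega)]
  have : gmom (toFun m) 0 b (a + (i.val + j.val)) = gmom (toFun m) a b (i.val + j.val) := by
    simp [gmom, Nat.zero_add]
  rw [this]
  ring

end meas

section support

variable {T : ℕ} {m : Fin (T + 1) → ℝ} {ν : Measure ℝ}

lemma support_lemma (hν : IsMomentSeq T ν m) (a : ℕ) (b : Bool) (n : ℕ) (v : Fin n → ℝ)
    (hn : 0 < n) (h : a + 2 * (n - 1) + b.toNat ≤ T) (hv : v ≠ 0)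
    (hform : v ⬝ᵥ (Matrix.of fun i j : Fin n =>
        gmom (toFun m) a b (i.val + j.val)).mulVec v = 0) :
    ∀ᵐ u ∂ν, u ∈ ((pvec v).roots.toFinset ∪ {0, 1} : Finset ℝ) ∧
      u ∈ Set.Icc (0:ℝ) 1 ∧
      (u ^ a * bpow b u = 0 ∨ u ∈ (pvec v).roots.toFinset) := by
  set f : ℝ → ℝ := fun u => u ^ a * bpow b u * (∑ i : Fin n, v i * u ^ i.val) ^ 2 with hf
  have hint : Integrable f ν := by
    apply integrable_cont hν
    cases b <;> simp only [hf, bpow, if_true, if_false] <;> continuity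
  have hnn : 0 ≤ᵐ[ν] f := by
    filter_upwards [ae_mem_Icc hν] with u hu
    have h1 : (0:ℝ) ≤ u ^ a := pow_nonneg hu.1 a
    have h2 : (0:ℝ) ≤ bpow b u := by
      cases b
      · simp [bpow]
      · simp only [bpow, if_true]; linarith [hu.2]
    positivity
  have hzero : ∫ u, f u ∂ν = 0 := by
    rw [hf]
    rw [integral_form hν a b n v hn h]
    exact hform
  have hae0 : f =ᵐ[ν] 0 := (integral_eq_zero_iff_of_nonneg_ae hnn hint).1 hzero
  filter_upwards [hae0, ae_mem_Icc hν] with u hu0 huI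
  have hu0' : u ^ a * bpow b u * (∑ i : Fin n, v i * u ^ i.val) ^ 2 = 0 := hu0
  have hcases : u ^ a * bpow b u = 0 ∨ u ∈ (pvec v).roots.toFinset := by
    rcases mul_eq_zero.1 hu0' with h1 | h1
    · exact Or.inl h1
    · right
      rw [Multiset.mem_toFinset, Polynomial.mem_roots (pvec_ne_zero hv), Polynomial.IsRoot,
        pvec_eval]
      exact pow_eq_zero_iff'.1 h1 |>.1
  refine ⟨?_, huI, hcases⟩
  simp only [Finset.mem_union, Finset.mem_insert, Finset.mem_singleton]
  rcases hcases with h1 | h1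
  · rcases mul_eq_zero.1 h1 with h2 | h2
    · right; left
      exact pow_eq_zero_iff'.1 h2 |>.1
    · right; right
      cases b
      · simp [bpow] at h2
      · simp only [bpow, if_true] at h2; linarith
  · exact Or.inl h1

lemma mem_of_meas_ne_zero {p : ℝ → Prop} (hae : ∀ᵐ u ∂ν, p u) {z : ℝ}
    (hz : ν {z} ≠ 0) : p z := by
  by_contra hpz
  apply hz
  apply measure_mono_null _ (MeasureTheory.ae_iff.1 hae)
  intro x hx
  simp only [Set.mem_singleton_iff] at hx
  subst hx
  exact hpz

lemma moments_discrete (hν : IsMomentSeq T ν m) (S : Finset ℝ)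
    (hS : ∀ᵐ u ∂ν, u ∈ (S : Set ℝ)) (j : ℕ) :
    ∫ u, u ^ j ∂ν = ∑ z ∈ S, (ν {z}).toReal * z ^ j := by
  haveI := hν.1
  have hres : ν.restrict (S : Set ℝ) = ν := Measure.restrict_eq_self_of_ae_mem hS
  have hIO : IntegrableOn (fun u : ℝ => u ^ j) (S : Set ℝ) ν := by
    rw [IntegrableOn, hres]
    exact integrable_cont hν (by continuity)
  have heq := MeasureTheory.setIntegral_finset S (f := fun u : ℝ => u ^ j) hIO
  have hstep : ∫ u, u ^ j ∂ν = ∫ u in (S : Set ℝ), u ^ j ∂ν := by rw [hres]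
  rw [hstep, heq]
  simp [smul_eq_mul, measureReal_def]

end support

section master

variable {T : ℕ} {m : Fin (T + 1) → ℝ}

lemma vdm_unique (S : Finset ℝ) (d : ℝ → ℝ)
    (h : ∀ i : ℕ, i < S.card → ∑ z ∈ S, d z * z ^ i = 0) : ∀ z ∈ S, d z = 0 := by
  set r := S.card with hr
  set e := S.orderIsoOfFin hr.symm with he
  set x : Fin r → ℝ := fun j => (e j : ℝ) with hx
  have hxinj : Function.Injective x := fun i j hij => by
    apply e.injective
    exact Subtype.ext hij
  set M : Matrix (Fin r) (Fin r) ℝ := Matrix.of fun i j => x j ^ (i : ℕ) with hM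
  set v' : Fin r → ℝ := fun j => d (x j) with hv'
  have hsum : ∀ g : ℝ → ℝ, ∑ j : Fin r, g (x j) = ∑ z ∈ S, g z := by
    intro g
    rw [← Finset.sum_attach S g]
    exact Fintype.sum_equiv e.toEquiv _ _ (fun j => rfl)
  have hmv : M.mulVec v' = 0 := by
    funext i
    simp only [Matrix.mulVec, dotProduct, hM, Matrix.of_apply, Pi.zero_apply, hv']
    have := hsum (fun z => d z * z ^ (i : ℕ))
    rw [← h i i.2, ← this]
    exact Finset.sum_congr rfl fun j _ => by ring
  have hdet : M.det ≠ 0 := by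
    have : M = (Matrix.vandermonde x).transpose := by
      ext i j
      simp [hM, Matrix.vandermonde]
    rw [this, Matrix.det_transpose, Matrix.det_vandermonde]
    apply Finset.prod_ne_zero_iff.2
    intro i _
    apply Finset.prod_ne_zero_iff.2
    intro j hj
    have : i < j := Finset.mem_Ioi.1 hj
    exact sub_ne_zero.2 fun hc => this.ne' (hxinj hc)
  have hv0 : v' = 0 := by
    by_contra hv0
    exact hdet (Matrix.exists_mulVec_eq_zero_iff.1 ⟨v', hv0, hmv⟩)
  intro z hz
  have : z = x (e.symm ⟨z, hz⟩) := by simp [hx]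
  rw [this]
  have := congrFun hv0 (e.symm ⟨z, hz⟩)
  exact this

lemma master (hT : 1 ≤ T) (μ : Measure ℝ) (hμ : IsMomentSeq T μ m)
    (a n : ℕ) (b : Bool) (hn : 0 < n) (hcon : a + 2 * (n - 1) + b.toNat ≤ T)
    (hdet : (Matrix.of fun i j : Fin n => gmom (toFun m) a b (i.val + j.val)).det = 0) :
    ∃ (S R : Finset ℝ) (w : ℝ → ℝ),
      R.card + 1 ≤ n ∧
      (∀ z, 0 ≤ w z) ∧
      (∀ z, w z ≠ 0 → z ∈ Set.Icc (0:ℝ) 1) ∧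
      (∀ z, w z ≠ 0 → z ^ a * bpow b z = 0 ∨ z ∈ R) ∧
      (∀ ν' : Measure ℝ, IsMomentSeq T ν' m → ∀ j : ℕ,
        ∫ u, u ^ j ∂ν' = ∑ z ∈ S, w z * z ^ j) ∧
      (S.filter fun z => w z ≠ 0) ⊆ R ∪ {0, 1} := by
  obtain ⟨v, hv, hmv⟩ := Matrix.exists_mulVec_eq_zero_iff.2 hdet
  set R := (pvec v).roots.toFinset with hR
  set S : Finset ℝ := R ∪ {0, 1} with hS
  set w : ℝ → ℝ := fun z => (μ {z}).toReal with hw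
  have hform : v ⬝ᵥ (Matrix.of fun i j : Fin n =>
      gmom (toFun m) a b (i.val + j.val)).mulVec v = 0 := by
    rw [hmv, dotProduct_zero]
  have hae : ∀ ν' : Measure ℝ, IsMomentSeq T ν' m →
      ∀ᵐ u ∂ν', u ∈ (S : Set ℝ) ∧ u ∈ Set.Icc (0:ℝ) 1 ∧
        (u ^ a * bpow b u = 0 ∨ u ∈ R) := by
    intro ν' hν'
    filter_upwards [support_lemma hν' a b n v hn hcon hv hform] with u hu
    exact ⟨Finset.mem_coe.2 hu.1, hu.2.1, hu.2.2⟩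
  have hmomd : ∀ ν' : Measure ℝ, IsMomentSeq T ν' m → ∀ j : ℕ,
      ∫ u, u ^ j ∂ν' = ∑ z ∈ S, (ν' {z}).toReal * z ^ j := by
    intro ν' hν' j
    apply moments_discrete hν'
    filter_upwards [hae ν' hν'] with u hu using hu.1
  have hcardR : R.card + 1 ≤ n := by
    have h1 : R.card ≤ Multiset.card (pvec v).roots := Multiset.toFinset_card_le _
    have h2 := Polynomial.card_roots' (pvec v)
    have h3 := pvec_natDegree_lt v hn
    omega
  have hcardS : S.card ≤ T + 1 := by
    have h1 : S.card ≤ R.card + 2 := by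
      apply le_trans (Finset.card_union_le _ _)
      have : ({0, 1} : Finset ℝ).card ≤ 2 := Finset.card_insert_le _ _ |>.trans (by simp)
      omega
    have hnT : n ≤ T := by omega
    omega
  have hweq : ∀ ν' : Measure ℝ, IsMomentSeq T ν' m → ∀ z ∈ S,
      (ν' {z}).toReal = w z := by
    intro ν' hν'
    have hz : ∀ z ∈ S, ((fun z => (ν' {z}).toReal - w z) z) = 0 := by
      apply vdm_unique
      intro i hi
      have hiT : i ≤ T := by omega
      have e1 : ∑ z ∈ S, (ν' {z}).toReal * z ^ i = toFun m i := by
        rw [← hmomd ν' hν' i]; exact moment_eq hν' hiT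
      have e2 : ∑ z ∈ S, w z * z ^ i = toFun m i := by
        rw [← hmomd μ hμ i]; exact moment_eq hμ hiT
      have : ∑ z ∈ S, ((ν' {z}).toReal - w z) * z ^ i
          = ∑ z ∈ S, (ν' {z}).toReal * z ^ i - ∑ z ∈ S, w z * z ^ i := by
        rw [← Finset.sum_sub_distrib]
        exact Finset.sum_congr rfl fun z _ => by ring
      rw [this, e1, e2, sub_self]
    intro z hzS
    have := hz z hzS
    simpa [sub_eq_zero] using this
  refine ⟨S, R, w, hcardR, fun z => ENNReal.toReal_nonneg, ?_, ?_, ?_, ?_⟩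
  · intro z hwz
    have hμz : μ {z} ≠ 0 := by
      intro hc; apply hwz; simp [hw, hc]
    exact (mem_of_meas_ne_zero (hae μ hμ) hμz).2.1
  · intro z hwz
    have hμz : μ {z} ≠ 0 := by
      intro hc; apply hwz; simp [hw, hc]
    exact (mem_of_meas_ne_zero (hae μ hμ) hμz).2.2
  · intro ν' hν' j
    rw [hmomd ν' hν' j]
    exact Finset.sum_congr rfl fun z hzS => by rw [hweq ν' hν' z hzS]
  · intro z hz
    exact Finset.mem_filter.1 hz |>.1

end master

section bridges

lemma Hlow_even {t n : ℕ} (f : ℕ → ℝ) (ht : t % 2 = 0) (hn : n = t / 2 + 1) :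
    Hlow t f = (Matrix.of fun i j : Fin n => gmom f 0 false (i.val + j.val)).det := by
  subst hn
  rw [Hlow, if_pos ht]
  congr 1
  ext i j
  simp only [Matrix.of_apply, gmom, Bool.false_eq_true, if_false, Nat.zero_add]

lemma Hlow_odd {t n : ℕ} (f : ℕ → ℝ) (ht : t % 2 = 1) (hn : n = (t + 1) / 2) :
    Hlow t f = (Matrix.of fun i j : Fin n => gmom f 1 false (i.val + j.val)).det := by
  subst hn
  rw [Hlow, if_neg (by omega)]
  congr 1
  ext i j
  simp only [Matrix.of_apply, gmom, Bool.false_eq_true, if_false]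
  congr 1
  omega

lemma Hup_even {t n : ℕ} (f : ℕ → ℝ) (ht : t % 2 = 0) (hn : n = t / 2) :
    Hup t f = (Matrix.of fun i j : Fin n => gmom f 1 true (i.val + j.val)).det := by
  subst hn
  rw [Hup, if_pos ht]
  congr 1
  ext i j
  simp only [Matrix.of_apply, gmom, if_true]
  have e1 : i.val + j.val + 1 = 1 + (i.val + j.val) := by omega
  have e2 : i.val + j.val + 2 = 1 + (i.val + j.val) + 1 := by omega
  rw [e1, e2]

lemma Hup_odd {t n : ℕ} (f : ℕ → ℝ) (ht : t % 2 = 1) (hn : n = (t + 1) / 2) :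
    Hup t f = (Matrix.of fun i j : Fin n => gmom f 0 true (i.val + j.val)).det := by
  subst hn
  rw [Hup, if_neg (by omega)]
  congr 1
  ext i j
  simp only [Matrix.of_apply, gmom, if_true, Nat.zero_add]

end bridges

section alg2

lemma bpow_nonneg {b : Bool} {z : ℝ} (hz : z ∈ Set.Icc (0:ℝ) 1) : 0 ≤ bpow b z := by
  cases b
  · simp [bpow]
  · simp only [bpow, if_true]; linarith [hz.2]

lemma hk_entry (S : Finset ℝ) (w : ℝ → ℝ) (e : ℕ) (b : Bool) (k : ℕ) :
    (∑ z ∈ S, (w z * z ^ e * bpow b z) * z ^ k)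
      = (if b then (∑ z ∈ S, w z * z ^ (e + k)) - ∑ z ∈ S, w z * z ^ (e + k + 1)
         else ∑ z ∈ S, w z * z ^ (e + k)) := by
  cases b
  · simp only [Bool.false_eq_true, if_false]
    refine Finset.sum_congr rfl fun z _ => ?_
    simp only [bpow, Bool.false_eq_true, if_false]
    rw [pow_add]; ring
  · simp only [if_true]
    rw [← Finset.sum_sub_distrib]
    refine Finset.sum_congr rfl fun z _ => ?_
    simp only [bpow, if_true]
    rw [pow_add, pow_add, pow_succ]
    ring

/-- Identification of a `gmom` matrix with a Hankel matrix of a discrete measure. -/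
lemma gmom_eq_hk {T : ℕ} {m : Fin (T+1) → ℝ} (S : Finset ℝ) (w : ℝ → ℝ)
    (hmomS : ∀ j : ℕ, j ≤ T → toFun m j = ∑ z ∈ S, w z * z ^ j)
    (a' n' : ℕ) (b : Bool) (hn' : 0 < n') (hcon : a' + 2 * (n' - 1) + b.toNat ≤ T) :
    (Matrix.of fun i j : Fin n' => gmom (toFun m) a' b (i.val + j.val))
      = hkM S (fun z => w z * z ^ a' * bpow b z) n' := by
  ext i j
  simp only [Matrix.of_apply, hkM]
  rw [hk_entry]
  have hi := i.isLt; have hj := j.isLt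
  cases b
  · simp only [gmom, Bool.false_eq_true, if_false]
    rw [hmomS (a' + (i.val + j.val)) (by simp only [Bool.toNat_false] at hcon; omega)]
  · simp only [gmom, if_true]
    rw [hmomS (a' + (i.val + j.val)) (by simp only [Bool.toNat_true] at hcon; omega),
      hmomS (a' + (i.val + j.val) + 1) (by simp only [Bool.toNat_true] at hcon; omega)]

/-- Core algebraic identification for Part 2. -/
lemma part2_alg (S : Finset ℝ) (w : ℝ → ℝ) (f : ℕ → ℝ) (a n₀ s t' : ℕ) (b : Bool)
    (q qstar : ℝ)
    (ht' : t' = a + 2 * n₀ + b.toNat) (hs : 0 < s)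
    (hw0 : ∀ z, 0 ≤ w z) (hIcc : ∀ z, w z ≠ 0 → z ∈ Set.Icc (0:ℝ) 1)
    (hf : ∀ j, j < t' → f j = ∑ z ∈ S, w z * z ^ (s + j))
    (hfq : ∀ j, t' ≤ j → f j = q)
    (hq : qstar = ∑ z ∈ S, w z * z ^ (s + t'))
    (hcard : (S.filter fun z => w z * z ^ (s + a) * bpow b z ≠ 0).card = n₀) :
    ((Matrix.of fun i j : Fin (n₀ + 1) => gmom f a b (i.val + j.val)).det = 0 ↔ q = qstar) := by
  set c : ℝ → ℝ := fun z => w z * z ^ (s + a) * bpow b z with hc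
  have hcnn : ∀ z ∈ S, 0 ≤ c z := by
    intro z _
    by_cases hwz : w z = 0
    · simp [hc, hwz]
    · exact mul_nonneg (mul_nonneg (hw0 z) (pow_nonneg (hIcc z hwz).1 _))
        (bpow_nonneg (hIcc z hwz))
  have hMeq : (Matrix.of fun i j : Fin (n₀ + 1) => gmom f a b (i.val + j.val))
      = Matrix.of (fun i j : Fin (n₀ + 1) =>
          if i = Fin.last n₀ ∧ j = Fin.last n₀ then gmom f a b (2 * n₀)
          else hkM S c (n₀ + 1) i j) := by
    ext i j
    simp only [Matrix.of_apply]
    by_cases hij : i = Fin.last n₀ ∧ j = Fin.last n₀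
    · rw [if_pos hij, hij.1, hij.2]
      simp only [Fin.val_last]
      congr 1
      omega
    · rw [if_neg hij]
      have hlt : i.val + j.val < 2 * n₀ := by
        have h1 : i.val < n₀ + 1 := i.isLt
        have h2 : j.val < n₀ + 1 := j.isLt
        have h3 : i.val ≠ n₀ ∨ j.val ≠ n₀ := by
          rcases not_and_or.1 hij with h | h
          · exact Or.inl fun hc => h (Fin.ext hc)
          · exact Or.inr fun hc => h (Fin.ext hc)
        omega
      show gmom f a b (i.val + j.val) = _
      rw [show ((hkM S c (n₀+1)) i j) = ∑ z ∈ S, c z * z ^ (i.val + j.val) from rfl]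
      rw [hc]
      rw [hk_entry S w (s + a) b (i.val + j.val)]
      cases b
      · simp only [gmom, Bool.false_eq_true, if_false]
        rw [hf (a + (i.val + j.val)) (by simp only [Bool.toNat_false] at ht'; omega)]
        rw [show s + (a + (i.val + j.val)) = s + a + (i.val + j.val) by omega]
      · simp only [gmom, if_true]
        rw [hf (a + (i.val + j.val)) (by simp only [Bool.toNat_true] at ht'; omega),
          hf (a + (i.val + j.val) + 1) (by simp only [Bool.toNat_true] at ht'; omega)]
        rw [show s + (a + (i.val + j.val)) = s + a + (i.val + j.val) by omega,
          show s + (a + (i.val + j.val) + 1) = s + a + (i.val + j.val) + 1 by omega]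
  rw [hMeq, det_corner]
  have hdet0 : (hkM S c (n₀ + 1)).det = 0 := hk_det_eq_zero (by rw [hcard]; omega)
  have hsub : (hkM S c (n₀ + 1)).submatrix Fin.castSucc Fin.castSucc = hkM S c n₀ := by
    ext i j
    simp [hkM]
  have hminor : (hkM S c n₀).det ≠ 0 := hk_det_ne_zero hcnn (le_of_eq hcard.symm)
  rw [hdet0, hsub, zero_add]
  have hcornerA : hkM S c (n₀ + 1) (Fin.last n₀) (Fin.last n₀)
      = (if b then (∑ z ∈ S, w z * z ^ (s + a + 2 * n₀)) - qstar else qstar) := by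
    have hcv : hkM S c (n₀ + 1) (Fin.last n₀) (Fin.last n₀)
        = ∑ z ∈ S, c z * z ^ (2 * n₀) := by
      rw [show ((hkM S c (n₀+1)) (Fin.last n₀) (Fin.last n₀))
          = ∑ z ∈ S, c z * z ^ ((Fin.last n₀).val + (Fin.last n₀).val) from rfl]
      rw [show (Fin.last n₀).val + (Fin.last n₀).val = 2 * n₀ by
        simp only [Fin.val_last]; omega]
    rw [hcv, hc, hk_entry S w (s + a) b (2 * n₀)]
    cases b
    · simp only [Bool.false_eq_true, if_false]
      rw [hq, show s + a + 2 * n₀ = s + t' by simp only [Bool.toNat_false] at ht'; omega]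
    · simp only [if_true]
      rw [hq, show s + a + 2 * n₀ + 1 = s + t' by simp only [Bool.toNat_true] at ht'; omega]
  have hgc : gmom f a b (2 * n₀)
      = (if b then (∑ z ∈ S, w z * z ^ (s + a + 2 * n₀)) - q else q) := by
    cases b
    · simp only [gmom, Bool.false_eq_true, if_false]
      exact hfq (a + 2 * n₀) (by simp only [Bool.toNat_false] at ht'; omega)
    · simp only [gmom, if_true]
      rw [hf (a + 2 * n₀) (by simp only [Bool.toNat_true] at ht'; omega),
        hfq (a + 2 * n₀ + 1) (by simp only [Bool.toNat_true] at ht'; omega)]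
      rw [show s + (a + 2 * n₀) = s + a + 2 * n₀ by omega]
  rw [hgc, hcornerA]
  have hdiff : ((if b then (∑ z ∈ S, w z * z ^ (s + a + 2 * n₀)) - q else q)
      - (if b then (∑ z ∈ S, w z * z ^ (s + a + 2 * n₀)) - qstar else qstar))
      = (if b then qstar - q else q - qstar) := by
    cases b <;> simp only [Bool.false_eq_true, if_false, if_true] <;> ring
  rw [hdiff]
  constructor
  · intro h
    rcases mul_eq_zero.1 h with h1 | h1
    · cases b
      · simpa [sub_eq_zero] using h1
      · simp only [if_true] at h1
        exact (sub_eq_zero.1 h1).symm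
    · exact absurd h1 hminor
  · intro h
    subst h
    cases b <;> simp

end alg2

section process

lemma process {T : ℕ} {m : Fin (T+1) → ℝ} (hT : 1 ≤ T) (μ : Measure ℝ)
    (hμ : IsMomentSeq T μ m) (T' a n₀ a' n' : ℕ) (b : Bool)
    (ht' : T' = a + 2 * n₀ + b.toNat) (hT'1 : 1 ≤ T') (hT'T : T' ≤ T)
    (ha : a ≤ 1) (ha' : a' = 1 - a) (hn'0 : a = 0 → n' = n₀) (hn'1 : a = 1 → n' = n₀ + 1)
    (hdet : (Matrix.of fun i j : Fin (n₀+1) =>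
        gmom (toFun m) a b (i.val + j.val)).det = 0)
    (hmin : 0 < n₀ → (Matrix.of fun i j : Fin n' =>
        gmom (toFun m) a' b (i.val + j.val)).det ≠ 0) :
    (qlow T m = qup T m) ∧
    ∀ q : ℝ, ((Matrix.of fun i j : Fin (n₀+1) =>
        gmom (fun nn => if nn < T' then toFun m (T - T' + 1 + nn) else q) a b
          (i.val + j.val)).det = 0 ↔ q = qlow T m) := by
  have hbt : b.toNat ≤ 1 := by cases b <;> simp
  have hcon : a + 2 * ((n₀ + 1) - 1) + b.toNat ≤ T := by
    simp only [Nat.add_sub_cancel]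
    omega
  obtain ⟨S, R, w, hcardR, hw0, hIcc, hzero, hint, hfsub⟩ :=
    master hT μ hμ a (n₀ + 1) b (by omega) hcon hdet
  have hmomS : ∀ j : ℕ, j ≤ T → toFun m j = ∑ z ∈ S, w z * z ^ j :=
    fun j hj => (moment_eq hμ hj).symm.trans (hint μ hμ j)
  set qstar : ℝ := ∑ z ∈ S, w z * z ^ (T + 1) with hqstar
  have himg : ((fun ν : Measure ℝ => ∫ u, u ^ (T + 1) ∂ν) '' Dset T m)
      = {qstar} := by
    ext x
    constructor
    · rintro ⟨ν, hν, rfl⟩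
      exact hint ν hν (T + 1)
    · intro hx
      rw [Set.mem_singleton_iff] at hx
      exact ⟨μ, hμ, (hint μ hμ (T + 1)).trans hx.symm⟩
  have hql : qlow T m = qstar := by rw [qlow, himg, csInf_singleton]
  have hqu : qup T m = qstar := by rw [qup, himg, csSup_singleton]
  refine ⟨hql.trans hqu.symm, ?_⟩
  intro q
  rw [hql]
  set s : ℕ := T - T' + 1 with hs
  -- the count
  have hcard : (S.filter fun z => w z * z ^ (s + a) * bpow b z ≠ 0).card = n₀ := by
    apply le_antisymm
    · have hsub2 : (S.filter fun z => w z * z ^ (s + a) * bpow b z ≠ 0) ⊆ R := by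
        intro z hz
        obtain ⟨hzS, hcz⟩ := Finset.mem_filter.1 hz
        have h1 : w z ≠ 0 := fun hc => hcz (by rw [hc]; ring)
        have h2 : z ^ (s + a) ≠ 0 := fun hc => hcz (by rw [hc]; ring)
        have h3 : bpow b z ≠ 0 := fun hc => hcz (by rw [hc]; ring)
        have hz0 : z ≠ 0 := fun hc => h2 (by rw [hc]; exact zero_pow (by omega))
        rcases hzero z h1 with h4 | h4
        · rcases mul_eq_zero.1 h4 with h5 | h5
          · exact absurd (pow_eq_zero_iff'.1 h5).1 hz0
          · exact absurd h5 h3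
        · exact h4
      calc (S.filter fun z => w z * z ^ (s + a) * bpow b z ≠ 0).card
          ≤ R.card := Finset.card_le_card hsub2
        _ ≤ n₀ := by omega
    · rcases Nat.eq_zero_or_pos n₀ with h0 | h0
      · omega
      · have hmindet := hmin h0
        have hn'pos : 0 < n' := by
          rcases Nat.lt_or_ge a 1 with ha0 | ha1
          · have := hn'0 (by omega); omega
          · have := hn'1 (by omega); omega
        have hcon' : a' + 2 * (n' - 1) + b.toNat ≤ T := by
          rcases Nat.lt_or_ge a 1 with ha0 | ha1
          · have := hn'0 (by omega); omega
          · have := hn'1 (by omega); omega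
        rw [gmom_eq_hk S w hmomS a' n' b hn'pos hcon'] at hmindet
        have hge : n' ≤ (S.filter fun z => w z * z ^ a' * bpow b z ≠ 0).card := by
          by_contra hlt
          exact hmindet (hk_det_eq_zero (by omega))
        rcases Nat.lt_or_ge a 1 with ha0 | ha1
        · have haz : a = 0 := by omega
          subst haz
          have hn'eq := hn'0 rfl
          have hfeq : (S.filter fun z => w z * z ^ a' * bpow b z ≠ 0)
              = (S.filter fun z => w z * z ^ (s + 0) * bpow b z ≠ 0) := by
            apply Finset.filter_congr
            intro z _
            have ha'1 : a' = 1 := by omega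
            subst ha'1
            simp only [ne_eq, eq_iff_iff]
            constructor
            · intro hne hc
              apply hne
              have h1 : w z ≠ 0 ∨ w z = 0 := (ne_or_eq _ _)
              rcases mul_eq_zero.1 hc with hc1 | hc1
              · rcases mul_eq_zero.1 hc1 with hc2 | hc2
                · rw [hc2]; ring
                · rw [pow_eq_zero_iff'.1 hc2 |>.1]
                  rw [zero_pow (by norm_num : (1:ℕ) ≠ 0)]
                  ring
              · rw [hc1]; ring
            · intro hne hc
              apply hne
              rcases mul_eq_zero.1 hc with hc1 | hc1
              · rcases mul_eq_zero.1 hc1 with hc2 | hc2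
                · rw [hc2]; ring
                · rw [pow_eq_zero_iff'.1 hc2 |>.1]
                  rw [zero_pow (by omega : s + 0 ≠ 0)]
                  ring
              · rw [hc1]; ring
          rw [← hfeq]
          omega
        · have haz : a = 1 := by omega
          subst haz
          have hn'eq := hn'1 rfl
          have ha'0 : a' = 0 := by omega
          subst ha'0
          have hsub3 : ((S.filter fun z => w z * z ^ 0 * bpow b z ≠ 0).erase 0)
              ⊆ (S.filter fun z => w z * z ^ (s + 1) * bpow b z ≠ 0) := by
            intro z hz
            have hz0 : z ≠ 0 := Finset.ne_of_mem_erase hz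
            obtain ⟨hzS, hcz⟩ := Finset.mem_filter.1 (Finset.mem_of_mem_erase hz)
            apply Finset.mem_filter.2
            refine ⟨hzS, fun hc => hcz ?_⟩
            rcases mul_eq_zero.1 hc with hc1 | hc1
            · rcases mul_eq_zero.1 hc1 with hc2 | hc2
              · rw [hc2]; ring
              · exact absurd (pow_eq_zero_iff'.1 hc2).1 hz0
            · rw [hc1]; ring
          have h1 := Finset.card_le_card hsub3
          have h2 := Finset.pred_card_le_card_erase
            (s := S.filter fun z => w z * z ^ 0 * bpow b z ≠ 0) (a := (0:ℝ))
          omega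
  have hiff := part2_alg S w
    (fun nn => if nn < T' then toFun m (T - T' + 1 + nn) else q) a n₀ s T' b q qstar
    ht' (by omega) hw0 hIcc
    (fun j hj => by
      simp only [if_pos hj]
      rw [hmomS (T - T' + 1 + j) (by omega)])
    (fun j hj => by simp only [if_neg (by omega : ¬ j < T')])
    (by rw [hqstar, show s + T' = T + 1 by omega])
    hcard
  exact hiff

end process

/-- Boundary case, identification of the next moment: with
`T' = min{t ∈ {1,…,T} : H̲_t(m) H̄_t(m) = 0}` and `q = q̲_T(m) = q̄_T(m)`, the value `q` is the
unique real solution of `H̲_{T'}(m_{T-T'+1}, …, m_T, q) = 0` when `H̲_{T'}(m) = 0`, and the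
unique real solution of `H̄_{T'}(m_{T-T'+1}, …, m_T, q) = 0` when `H̄_{T'}(m) = 0`. -/
theorem hankel_boundary_equation (T : ℕ) (hT : 1 ≤ T) (m : Fin (T + 1) → ℝ)
    (hm : m ∈ momSpace T) (hzero : Hlow T (toFun m) * Hup T (toFun m) = 0)
    (T' : ℕ) (hT' : T' = sInf {t : ℕ | 1 ≤ t ∧ t ≤ T ∧ Hlow t (toFun m) * Hup t (toFun m) = 0}) :
    qlow T m = qup T m ∧
    (Hlow T' (toFun m) = 0 →
      ∀ q : ℝ,
        Hlow T' (fun n => if n < T' then toFun m (T - T' + 1 + n) else q) = 0 ↔ q = qlow T m) ∧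
    (Hup T' (toFun m) = 0 →
      ∀ q : ℝ,
        Hup T' (fun n => if n < T' then toFun m (T - T' + 1 + n) else q) = 0 ↔ q = qlow T m) := by
  classical
  obtain ⟨μ, hμ⟩ := hm
  have hTE : T ∈ {t : ℕ | 1 ≤ t ∧ t ≤ T ∧ Hlow t (toFun m) * Hup t (toFun m) = 0} :=
    ⟨hT, le_refl T, hzero⟩
  have hT'mem : T' ∈ {t : ℕ | 1 ≤ t ∧ t ≤ T ∧ Hlow t (toFun m) * Hup t (toFun m) = 0} := by
    rw [hT']
    exact Nat.sInf_mem ⟨T, hTE⟩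
  obtain ⟨hT'1, hT'T, hT'0⟩ := hT'mem
  have hminf : ∀ t, 1 ≤ t → t < T' → Hlow t (toFun m) ≠ 0 ∧ Hup t (toFun m) ≠ 0 := by
    intro t h1 h2
    have hnm : t ∉ {t : ℕ | 1 ≤ t ∧ t ≤ T ∧ Hlow t (toFun m) * Hup t (toFun m) = 0} := by
      intro hc
      have := Nat.sInf_le hc
      omega
    have hne : Hlow t (toFun m) * Hup t (toFun m) ≠ 0 := fun hc => hnm ⟨h1, by omega, hc⟩
    exact mul_ne_zero_iff.1 hne
  have HL : Hlow T' (toFun m) = 0 →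
      (qlow T m = qup T m) ∧ ∀ q : ℝ,
        (Hlow T' (fun n => if n < T' then toFun m (T - T' + 1 + n) else q) = 0 ↔ q = qlow T m) := by
    intro h
    rcases Nat.even_or_odd T' with ⟨k, hk⟩ | ⟨k, hk⟩
    · -- T' even, T' = 2k, k ≥ 1 : a = 0, b = false, n₀ = k
      have hpar : T' % 2 = 0 := by omega
      rw [Hlow_even (toFun m) hpar (by omega : k + 1 = T' / 2 + 1)] at h
      have hmin : 0 < k → (Matrix.of fun i j : Fin k =>
          gmom (toFun m) 1 false (i.val + j.val)).det ≠ 0 := by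
        intro hk0
        have hsrc := (hminf (T' - 1) (by omega) (by omega)).1
        rw [Hlow_odd (toFun m) (by omega : (T' - 1) % 2 = 1)
          (by omega : k = ((T' - 1) + 1) / 2)] at hsrc
        exact hsrc
      obtain ⟨p1, p2⟩ := process hT μ hμ T' 0 k 1 k false
        (by simp only [Bool.toNat_false]; omega) hT'1 hT'T (by omega) (by omega)
        (fun _ => rfl) (fun hc => by omega) h hmin
      refine ⟨p1, fun q => ?_⟩
      rw [Hlow_even (fun n => if n < T' then toFun m (T - T' + 1 + n) else q) hpar
        (by omega : k + 1 = T' / 2 + 1)]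
      exact p2 q
    · -- T' odd, T' = 2k+1 : a = 1, b = false, n₀ = k
      have hpar : T' % 2 = 1 := by omega
      rw [Hlow_odd (toFun m) hpar (by omega : k + 1 = (T' + 1) / 2)] at h
      have hmin : 0 < k → (Matrix.of fun i j : Fin (k + 1) =>
          gmom (toFun m) 0 false (i.val + j.val)).det ≠ 0 := by
        intro hk0
        have hsrc := (hminf (T' - 1) (by omega) (by omega)).1
        rw [Hlow_even (toFun m) (by omega : (T' - 1) % 2 = 0)
          (by omega : k + 1 = (T' - 1) / 2 + 1)] at hsrc
        exact hsrc
      obtain ⟨p1, p2⟩ := process hT μ hμ T' 1 k 0 (k + 1) false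
        (by simp only [Bool.toNat_false]; omega) hT'1 hT'T (by omega) (by omega)
        (fun hc => by omega) (fun _ => rfl) h hmin
      refine ⟨p1, fun q => ?_⟩
      rw [Hlow_odd (fun n => if n < T' then toFun m (T - T' + 1 + n) else q) hpar
        (by omega : k + 1 = (T' + 1) / 2)]
      exact p2 q
  have HU : Hup T' (toFun m) = 0 →
      (qlow T m = qup T m) ∧ ∀ q : ℝ,
        (Hup T' (fun n => if n < T' then toFun m (T - T' + 1 + n) else q) = 0 ↔ q = qlow T m) := by
    intro h
    rcases Nat.even_or_odd T' with ⟨k, hk⟩ | ⟨k, hk⟩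
    · -- T' even = 2k, k ≥ 1 : a = 1, b = true, n₀ = k - 1
      have hpar : T' % 2 = 0 := by omega
      have hk1 : 1 ≤ k := by omega
      rw [Hup_even (toFun m) hpar (by omega : (k - 1) + 1 = T' / 2)] at h
      have hmin : 0 < k - 1 → (Matrix.of fun i j : Fin ((k - 1) + 1) =>
          gmom (toFun m) 0 true (i.val + j.val)).det ≠ 0 := by
        intro hk0
        have hsrc := (hminf (T' - 1) (by omega) (by omega)).2
        rw [Hup_odd (toFun m) (by omega : (T' - 1) % 2 = 1)
          (by omega : (k - 1) + 1 = ((T' - 1) + 1) / 2)] at hsrc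
        exact hsrc
      obtain ⟨p1, p2⟩ := process hT μ hμ T' 1 (k - 1) 0 ((k - 1) + 1) true
        (by simp only [Bool.toNat_true]; omega) hT'1 hT'T (by omega) (by omega)
        (fun hc => by omega) (fun _ => rfl) h hmin
      refine ⟨p1, fun q => ?_⟩
      rw [Hup_even (fun n => if n < T' then toFun m (T - T' + 1 + n) else q) hpar
        (by omega : (k - 1) + 1 = T' / 2)]
      exact p2 q
    · -- T' odd = 2k+1 : a = 0, b = true, n₀ = k
      have hpar : T' % 2 = 1 := by omega
      rw [Hup_odd (toFun m) hpar (by omega : k + 1 = (T' + 1) / 2)] at h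
      have hmin : 0 < k → (Matrix.of fun i j : Fin k =>
          gmom (toFun m) 1 true (i.val + j.val)).det ≠ 0 := by
        intro hk0
        have hsrc := (hminf (T' - 1) (by omega) (by omega)).2
        rw [Hup_even (toFun m) (by omega : (T' - 1) % 2 = 0)
          (by omega : k = (T' - 1) / 2)] at hsrc
        exact hsrc
      obtain ⟨p1, p2⟩ := process hT μ hμ T' 0 k 1 k true
        (by simp only [Bool.toNat_true]; omega) hT'1 hT'T (by omega) (by omega)
        (fun _ => rfl) (fun hc => by omega) h hmin
      refine ⟨p1, fun q => ?_⟩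
      rw [Hup_odd (fun n => if n < T' then toFun m (T - T' + 1 + n) else q) hpar
        (by omega : k + 1 = (T' + 1) / 2)]
      exact p2 q
  have part1 : qlow T m = qup T m := by
    rcases mul_eq_zero.1 hT'0 with h | h
    · exact (HL h).1
    · exact (HU h).1
  exact ⟨part1, fun h => (HL h).2, fun h => (HU h).2⟩
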